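/- Let f_1, …, f_d : ℝ^{n×p} → ℝ be differentiable with f = (1/d)Σ_{i=1}^d f_i, let M > 0 satisfy ‖∇f(X)‖_F ≤ M for all X ∈ R = {X : ‖XᵀX − I_p‖_F ≤ 1/6}, and let β ≥ max{1, (6 + 21M)/5}. For each i let H_i(X) = G_i(X) + β·X(XᵀX − I_p) with G_i(X) = ∇f_i(X)((3/2)I_p − (1/2)XᵀX) − X·sym(Xᵀ∇f_i(X)). Let X_1, …, X_d ∈ ℝ^{n×p} with X̄ = (1/d)Σ_{i=1}^d X_i ∈ R, and suppose each H_i satisfies ‖H_i(X̄) − H_i(X_i)‖_F ≤ L̂·‖X̄ − X_i‖_F for a constant L̂ > 0. Then the stationarity gap satisfies ‖(1/d)Σ_{i=1}^d G_i(X̄)‖_F² + (1/d)Σ_{i=1}^d ‖X_i − X̄‖_F² + ‖X̄ᵀX̄ − I_p‖_F² ≤ 2(L̂² + 1)·( ‖(1/d)Σ_{i=1}^d H_i(X_i)‖_F² + (1/d)Σ_{i=1}^d ‖X_i − X̄‖_F² ). -/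

import Mathlib

open Matrix BigOperators Finset Kronecker

/- Equip matrix spaces with the Frobenius norm (finite-dimensional, so the resulting calculus
notions such as `fderiv`/`Differentiable` are norm-independent). -/
attribute [local instance] Matrix.frobeniusNormedAddCommGroup Matrix.frobeniusNormedSpace

/-- The Frobenius norm of a real matrix. -/
noncomputable def frob {m k : Type*} [Fintype m] [Fintype k] (A : Matrix m k ℝ) : ℝ :=
  Real.sqrt (∑ i, ∑ j, (A i j) ^ 2)

/-- The trace inner product ⟨A, B⟩ = tr(AᵀB) of real matrices. -/
noncomputable def minner {m k : Type*} [Fintype m] [Fintype k] (A B : Matrix m k ℝ) : ℝ :=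
  (Aᵀ * B).trace

/-- The symmetric part sym(B) = (B + Bᵀ)/2 of a square matrix. -/
noncomputable def symPart {k : Type*} (B : Matrix k k ℝ) : Matrix k k ℝ :=
  (1 / 2 : ℝ) • (B + Bᵀ)

/-- The generalized Riemannian gradient G(X) = ∇f(X)((3/2)I - (1/2)XᵀX) - X·sym(Xᵀ∇f(X)),
expressed in terms of the Euclidean gradient matrix `Gf = ∇f(X)`. -/
noncomputable def Gdir {n p : ℕ} (Gf X : Matrix (Fin n) (Fin p) ℝ) :
    Matrix (Fin n) (Fin p) ℝ :=
  Gf * ((3 / 2 : ℝ) • (1 : Matrix (Fin p) (Fin p) ℝ) - (1 / 2 : ℝ) • (Xᵀ * X))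
    - X * symPart (Xᵀ * Gf)

/-- The feasibility direction E(X) = X(XᵀX - I). -/
noncomputable def Edir {n p : ℕ} (X : Matrix (Fin n) (Fin p) ℝ) :
    Matrix (Fin n) (Fin p) ℝ :=
  X * (Xᵀ * X - 1)

/-- The spectral norm (largest singular value) of a real matrix, as the operator norm of the
associated Euclidean linear map. -/
noncomputable def specNorm {m k : Type*} [Fintype m] [Fintype k] [DecidableEq k]
    (A : Matrix m k ℝ) : ℝ :=
  ‖LinearMap.toContinuousLinearMap (Matrix.toEuclideanLin A)‖

/-- The smallest singular value of a real matrix: the square root of the smallest eigenvalue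
of AᵀA (= AᴴA over ℝ). -/
noncomputable def sigmaMin {m k : Type*} [Fintype m] [Fintype k] [DecidableEq m] [DecidableEq k]
    (A : Matrix m k ℝ) : ℝ :=
  Real.sqrt (⨅ i, (Matrix.isHermitian_conjTranspose_mul_self A).eigenvalues i)

/- ===== Auxiliary lemmas ===== -/

section Toolkit
variable {m k : Type*} [Fintype m] [Fintype k]

lemma minner_eq_sum (A B : Matrix m k ℝ) : minner A B = ∑ i, ∑ j, A i j * B i j := by
  rw [minner, Matrix.trace]
  simp only [Matrix.diag_apply, Matrix.mul_apply, Matrix.transpose_apply]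
  rw [Finset.sum_comm]

lemma frob_nonneg (A : Matrix m k ℝ) : 0 ≤ frob A := Real.sqrt_nonneg _

lemma frob_sq (A : Matrix m k ℝ) : frob A ^ 2 = ∑ i, ∑ j, (A i j) ^ 2 :=
  Real.sq_sqrt (by positivity)

lemma minner_self (A : Matrix m k ℝ) : minner A A = frob A ^ 2 := by
  rw [minner_eq_sum, frob_sq]; simp [sq]

lemma frob_eq_norm (A : Matrix m k ℝ) : frob A = ‖A‖ := by
  rw [Matrix.frobenius_norm_def, frob, Real.sqrt_eq_rpow]
  congr 1
  refine Finset.sum_congr rfl fun i _ => Finset.sum_congr rfl fun j _ => ?_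
  rw [Real.norm_eq_abs, show (2:ℝ) = ((2:ℕ):ℝ) by norm_num, Real.rpow_natCast, sq_abs]

lemma minner_le (A B : Matrix m k ℝ) : minner A B ≤ frob A * frob B := by
  rw [minner_eq_sum, frob, frob]
  simpa [Fintype.sum_prod_type] using Real.sum_mul_le_sqrt_mul_sqrt (Finset.univ : Finset (m × k))
    (fun q => A q.1 q.2) (fun q => B q.1 q.2)

lemma minner_comm (A B : Matrix m k ℝ) : minner A B = minner B A := by
  rw [minner, minner, ← Matrix.trace_transpose (Aᵀ * B), Matrix.transpose_mul,
    Matrix.transpose_transpose]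

lemma minner_neg_left (A B : Matrix m k ℝ) : minner (-A) B = -minner A B := by
  simp [minner, Matrix.transpose_neg, Matrix.neg_mul]

lemma frob_neg (A : Matrix m k ℝ) : frob (-A) = frob A := by
  simp [frob_eq_norm]

lemma neg_minner_le (A B : Matrix m k ℝ) : -(frob A * frob B) ≤ minner A B := by
  have := minner_le (-A) B
  rw [minner_neg_left, frob_neg] at this
  linarith

lemma minner_add_left (A B C : Matrix m k ℝ) : minner (A + B) C = minner A C + minner B C := by
  simp [minner, Matrix.transpose_add, Matrix.add_mul]

lemma minner_sub_left (A B C : Matrix m k ℝ) : minner (A - B) C = minner A C - minner B C := by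
  simp [minner, Matrix.transpose_sub, Matrix.sub_mul]

lemma minner_smul_left (c : ℝ) (A B : Matrix m k ℝ) : minner (c • A) B = c * minner A B := by
  simp [minner, Matrix.transpose_smul, Matrix.smul_mul]

lemma minner_smul_right (c : ℝ) (A B : Matrix m k ℝ) : minner A (c • B) = c * minner A B := by
  rw [minner_comm, minner_smul_left, minner_comm]

lemma minner_add_right (A B C : Matrix m k ℝ) : minner A (B + C) = minner A B + minner A C := by
  rw [minner_comm, minner_add_left, minner_comm A B, minner_comm A C]

lemma frob_smul (c : ℝ) (A : Matrix m k ℝ) : frob (c • A) = |c| * frob A := by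
  simp [frob_eq_norm, norm_smul, Real.norm_eq_abs]

lemma frob_add_le (A B : Matrix m k ℝ) : frob (A + B) ≤ frob A + frob B := by
  simp only [frob_eq_norm]; exact norm_add_le _ _

lemma frob_transpose (A : Matrix m k ℝ) : frob Aᵀ = frob A := by
  simp [frob_eq_norm, Matrix.frobenius_norm_transpose]

lemma frob_mul_le {l : Type*} [Fintype l] (A : Matrix m l ℝ) (B : Matrix l k ℝ) :
    frob (A * B) ≤ frob A * frob B := by
  simp only [frob_eq_norm]; exact Matrix.frobenius_norm_mul A B

lemma frob_sum_le {ι : Type*} (s : Finset ι) (A : ι → Matrix m k ℝ) :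
    frob (∑ i ∈ s, A i) ≤ ∑ i ∈ s, frob (A i) := by
  simp only [frob_eq_norm]; exact norm_sum_le _ _

lemma frob_expand_sq (A B : Matrix m k ℝ) :
    frob (A + B) ^ 2 = frob A ^ 2 + 2 * minner A B + frob B ^ 2 := by
  rw [← minner_self, minner_add_left, minner_add_right, minner_add_right,
    minner_self, minner_self, minner_comm B A]
  ring

lemma eq_zero_of_minner_self (A : Matrix m k ℝ) (h : minner A A = 0) : A = 0 := by
  rw [minner_eq_sum] at h
  ext i j
  have h1 : ∀ i ∈ Finset.univ (α := m), (0:ℝ) ≤ ∑ j, A i j * A i j :=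
    fun i _ => Finset.sum_nonneg fun j _ => mul_self_nonneg _
  have h2 := (Finset.sum_eq_zero_iff_of_nonneg h1).mp h i (Finset.mem_univ i)
  have h3 := (Finset.sum_eq_zero_iff_of_nonneg
    (fun j _ => mul_self_nonneg (A i j))).mp h2 j (Finset.mem_univ j)
  simpa [mul_self_eq_zero] using h3

lemma frob_sub_comm (A B : Matrix m k ℝ) : frob (A - B) = frob (B - A) := by
  rw [← frob_neg (A - B), neg_sub]

end Toolkit

section TraceLemmas
variable {q : Type*} [Fintype q]

lemma trace_mul_transpose_symm (P B : Matrix q q ℝ) (hP : Pᵀ = P) :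
    (P * Bᵀ).trace = (P * B).trace := by
  rw [← Matrix.trace_transpose (P * Bᵀ), Matrix.transpose_mul, Matrix.transpose_transpose, hP,
    Matrix.trace_mul_comm]

lemma trace_mul_symPart (P B : Matrix q q ℝ) (hP : Pᵀ = P) :
    (P * symPart B).trace = (P * B).trace := by
  rw [symPart, Matrix.mul_smul, Matrix.trace_smul, Matrix.mul_add, Matrix.trace_add,
    trace_mul_transpose_symm P B hP, smul_eq_mul]
  ring

end TraceLemmas

lemma key_core {n p : ℕ} (Gf X : Matrix (Fin n) (Fin p) ℝ)
    (A T C B S : Matrix (Fin p) (Fin p) ℝ)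
    (hA : A = Xᵀ * X) (hT : T = A - 1)
    (hC : C = (3/2 : ℝ) • (1 : Matrix (Fin p) (Fin p) ℝ) - (1/2 : ℝ) • A)
    (hB : B = Xᵀ * Gf) (hS : S = symPart B) :
    minner (Gf * C - X * S) (X * T) = -(3/2 : ℝ) * ((T * T) * S).trace := by
  have hAT : Aᵀ = A := by rw [hA, Matrix.transpose_mul, Matrix.transpose_transpose]
  have hTT : Tᵀ = T := by rw [hT, Matrix.transpose_sub, hAT, Matrix.transpose_one]
  have hCT : Cᵀ = C := by
    rw [hC, Matrix.transpose_sub, Matrix.transpose_smul, Matrix.transpose_smul, hAT,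
      Matrix.transpose_one]
  have hST : Sᵀ = S := by
    rw [hS, symPart, Matrix.transpose_smul, Matrix.transpose_add, Matrix.transpose_transpose,
      add_comm]
  have hBT : Bᵀ = Gfᵀ * X := by rw [hB, Matrix.transpose_mul, Matrix.transpose_transpose]
  have hcomm : T * C = C * T := by
    rw [hT, hC]
    simp only [Matrix.sub_mul, Matrix.mul_sub, Matrix.smul_mul, Matrix.mul_smul,
      Matrix.mul_one, Matrix.one_mul, smul_sub]
    module
  have hcommA : T * A = A * T := by
    rw [hT]
    simp only [Matrix.sub_mul, Matrix.mul_sub, Matrix.one_mul, Matrix.mul_one]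
  have hpoly : T * C - A * T = (-(3/2 : ℝ)) • (T * T) := by
    rw [hT, hC]
    simp only [Matrix.sub_mul, Matrix.mul_sub, Matrix.smul_mul, Matrix.mul_smul,
      Matrix.mul_one, Matrix.one_mul, smul_sub]
    module
  have hsymTC : (T * C)ᵀ = T * C := by rw [Matrix.transpose_mul, hCT, hTT, hcomm]
  have hsymAT : (A * T)ᵀ = A * T := by rw [Matrix.transpose_mul, hAT, hTT, hcommA]
  have hsymTT : (T * T)ᵀ = T * T := by rw [Matrix.transpose_mul, hTT]
  have e1 : minner (Gf * C - X * S) (X * T)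
      = ((C * Bᵀ) * T).trace - ((S * A) * T).trace := by
    rw [minner, Matrix.transpose_sub, Matrix.transpose_mul, Matrix.transpose_mul, hCT, hST,
      Matrix.sub_mul, Matrix.trace_sub, hBT, hA]
    simp only [Matrix.mul_assoc]
  have e2 : ((C * Bᵀ) * T).trace = ((T * C) * B).trace := by
    rw [Matrix.trace_mul_comm, ← Matrix.mul_assoc, trace_mul_transpose_symm (T * C) B hsymTC]
  have e3 : ((S * A) * T).trace = ((A * T) * B).trace := by
    rw [Matrix.mul_assoc, Matrix.trace_mul_comm, hS, trace_mul_symPart (A * T) B hsymAT]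
  have e4 : ((T * C) * B).trace - ((A * T) * B).trace = -(3/2 : ℝ) * ((T * T) * B).trace := by
    rw [← Matrix.trace_sub, ← Matrix.sub_mul, hpoly, Matrix.smul_mul, Matrix.trace_smul,
      smul_eq_mul]
  have e5 : ((T * T) * S).trace = ((T * T) * B).trace := by
    rw [hS, trace_mul_symPart (T * T) B hsymTT]
  rw [e1, e2, e3, e4, e5]

-- ===== auxiliary lemmas about Gdir linearity, stepA, stepB =====

lemma Gdir_add {n p : ℕ} (g1 g2 X : Matrix (Fin n) (Fin p) ℝ) :
    Gdir (g1 + g2) X = Gdir g1 X + Gdir g2 X := by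
  simp only [Gdir, symPart, Matrix.mul_add, Matrix.add_mul, Matrix.transpose_add, smul_add]
  abel

lemma symPart_smul (c : ℝ) {k : Type*} (B : Matrix k k ℝ) :
    symPart (c • B) = c • symPart B := by
  rw [symPart, symPart, Matrix.transpose_smul, ← smul_add, smul_comm]

lemma Gdir_smul {n p : ℕ} (c : ℝ) (g X : Matrix (Fin n) (Fin p) ℝ) :
    Gdir (c • g) X = c • Gdir g X := by
  rw [Gdir, Gdir, Matrix.mul_smul, symPart_smul, Matrix.mul_smul, Matrix.smul_mul, ← smul_sub]

lemma Gdir_sum {n p : ℕ} {ι : Type*} (s : Finset ι) (g : ι → Matrix (Fin n) (Fin p) ℝ)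
    (X : Matrix (Fin n) (Fin p) ℝ) :
    Gdir (∑ i ∈ s, g i) X = ∑ i ∈ s, Gdir (g i) X :=
  map_sum (AddMonoidHom.mk' (fun gg => Gdir gg X) (fun a b => Gdir_add a b X)) g s

lemma minner_sum_left {m k : Type*} [Fintype m] [Fintype k] {ι : Type*} (s : Finset ι)
    (A : ι → Matrix m k ℝ) (V : Matrix m k ℝ) :
    minner (∑ i ∈ s, A i) V = ∑ i ∈ s, minner (A i) V :=
  map_sum (AddMonoidHom.mk' (fun B => minner B V) (fun a b => minner_add_left a b V)) A s

lemma key_inner {n p : ℕ} (Gf X : Matrix (Fin n) (Fin p) ℝ) :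
    minner (Gdir Gf X) (Edir X)
      = -(3/2 : ℝ) * (((Xᵀ * X - 1) * (Xᵀ * X - 1)) * symPart (Xᵀ * Gf)).trace := by
  unfold Gdir Edir
  exact key_core Gf X _ _ _ _ _ rfl rfl rfl rfl rfl

lemma mul_inner_expand {n p : ℕ} (X : Matrix (Fin n) (Fin p) ℝ) (B : Matrix (Fin p) (Fin p) ℝ) :
    minner (X * B) (X * B) = ((Xᵀ * X - 1) * (B * Bᵀ)).trace + minner B B := by
  have h : (X * B)ᵀ * (X * B) = Bᵀ * ((Xᵀ * X - 1) * B) + Bᵀ * B := by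
    rw [Matrix.transpose_mul, Matrix.mul_assoc, ← Matrix.mul_assoc Xᵀ X B,
      Matrix.sub_mul, Matrix.one_mul, Matrix.mul_sub]
    abel
  rw [minner, h, Matrix.trace_add]
  have h2 : (Bᵀ * ((Xᵀ * X - 1) * B)).trace = ((Xᵀ * X - 1) * (B * Bᵀ)).trace := by
    rw [Matrix.trace_mul_comm, Matrix.mul_assoc]
  rw [h2, minner]

lemma scalar_key (M β t : ℝ) (hM : 0 < M) (hβ1 : 1 ≤ β) (hβ2 : (6 + 21 * M) / 5 ≤ β)
    (ht : 0 ≤ t) :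
    t ^ 2 ≤ β ^ 2 * (5/6 * t ^ 2) + 2 * β * (-(7/4 * M * t ^ 2)) := by
  have hβ0 : (0:ℝ) ≤ β := le_trans zero_le_one hβ1
  nlinarith [mul_nonneg (mul_nonneg (sub_nonneg.2 hβ2) hβ0) (sq_nonneg t),
    mul_nonneg (sub_nonneg.2 hβ1) (sq_nonneg t)]

set_option maxHeartbeats 2000000 in
lemma stepB {n p : ℕ} (Gf X : Matrix (Fin n) (Fin p) ℝ) (M β : ℝ) (hM : 0 < M)
    (hGf : frob Gf ≤ M) (hR : frob (Xᵀ * X - 1) ≤ 1/6)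
    (hβ1 : 1 ≤ β) (hβ2 : (6 + 21 * M) / 5 ≤ β) :
    frob (Gdir Gf X) ^ 2 + frob (Xᵀ * X - 1) ^ 2
      ≤ frob (Gdir Gf X + β • Edir X) ^ 2 := by
  have hβ0 : (0:ℝ) ≤ β := le_trans zero_le_one hβ1
  have hTT : (Xᵀ * X - 1)ᵀ = Xᵀ * X - 1 := by
    rw [Matrix.transpose_sub, Matrix.transpose_mul, Matrix.transpose_transpose,
      Matrix.transpose_one]
  have htn : 0 ≤ frob (Xᵀ * X - 1) := frob_nonneg _
  have hbn : 0 ≤ frob (Xᵀ * Gf) := frob_nonneg _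
  -- bound frob (Xᵀ * Gf)
  have hXB : frob (X * (Xᵀ * Gf)) ^ 2 ≤ 7/6 * frob (Xᵀ * Gf) ^ 2 := by
    have e := mul_inner_expand X (Xᵀ * Gf)
    have h1 : ((Xᵀ * X - 1) * ((Xᵀ * Gf) * (Xᵀ * Gf)ᵀ)).trace
        = minner (Xᵀ * X - 1) ((Xᵀ * Gf) * (Xᵀ * Gf)ᵀ) := by rw [minner, hTT]
    have h2 : minner (Xᵀ * X - 1) ((Xᵀ * Gf) * (Xᵀ * Gf)ᵀ)
        ≤ frob (Xᵀ * X - 1) * frob ((Xᵀ * Gf) * (Xᵀ * Gf)ᵀ) := minner_le _ _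
    have h3 : frob ((Xᵀ * Gf) * (Xᵀ * Gf)ᵀ) ≤ frob (Xᵀ * Gf) * frob (Xᵀ * Gf) := by
      calc frob ((Xᵀ * Gf) * (Xᵀ * Gf)ᵀ) ≤ frob (Xᵀ * Gf) * frob (Xᵀ * Gf)ᵀ := frob_mul_le _ _
        _ = frob (Xᵀ * Gf) * frob (Xᵀ * Gf) := by rw [frob_transpose]
    have h4 : minner (X * (Xᵀ * Gf)) (X * (Xᵀ * Gf)) = frob (X * (Xᵀ * Gf)) ^ 2 :=
      minner_self _
    have h5 : minner (Xᵀ * Gf) (Xᵀ * Gf) = frob (Xᵀ * Gf) ^ 2 := minner_self _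
    nlinarith [mul_le_mul hR h3 (frob_nonneg _) (by norm_num : (0:ℝ) ≤ 1/6),
      frob_nonneg ((Xᵀ * Gf) * (Xᵀ * Gf)ᵀ)]
  have hB : frob (Xᵀ * Gf) ≤ 7/6 * M := by
    have hBT : (Xᵀ * Gf)ᵀ = Gfᵀ * X := by
      rw [Matrix.transpose_mul, Matrix.transpose_transpose]
    have h1 : minner Gf (X * (Xᵀ * Gf)) = frob (Xᵀ * Gf) ^ 2 := by
      rw [← minner_self, minner, minner, hBT, Matrix.mul_assoc]
    have h2 : minner Gf (X * (Xᵀ * Gf)) ≤ frob Gf * frob (X * (Xᵀ * Gf)) := minner_le _ _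
    have h3 : frob (Xᵀ * Gf) ^ 2 ≤ M * frob (X * (Xᵀ * Gf)) := by
      nlinarith [frob_nonneg (X * (Xᵀ * Gf))]
    have h4 : frob (Xᵀ * Gf) ^ 2 ≤ 7/6 * M ^ 2 := by
      nlinarith [frob_nonneg (X * (Xᵀ * Gf)), mul_pos hM hM, sq_nonneg (frob (Xᵀ * Gf))]
    nlinarith [mul_pos hM hM]
  have hS : frob (symPart (Xᵀ * Gf)) ≤ 7/6 * M := by
    have : frob (symPart (Xᵀ * Gf)) ≤ frob (Xᵀ * Gf) := by
      rw [symPart, frob_smul]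
      calc |1/2| * frob (Xᵀ * Gf + (Xᵀ * Gf)ᵀ)
          ≤ |1/2| * (frob (Xᵀ * Gf) + frob (Xᵀ * Gf)ᵀ) := by
            apply mul_le_mul_of_nonneg_left (frob_add_le _ _) (abs_nonneg _)
        _ = frob (Xᵀ * Gf) := by rw [frob_transpose]; rw [abs_of_nonneg]; ring; norm_num
    linarith
  -- inner product bound
  have hGE : -(7/4 * M * frob (Xᵀ * X - 1) ^ 2) ≤ minner (Gdir Gf X) (Edir X) := by
    rw [key_inner]
    have hsymTT : ((Xᵀ * X - 1) * (Xᵀ * X - 1))ᵀ = (Xᵀ * X - 1) * (Xᵀ * X - 1) := by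
      rw [Matrix.transpose_mul, hTT]
    have h1 : (((Xᵀ * X - 1) * (Xᵀ * X - 1)) * symPart (Xᵀ * Gf)).trace
        = minner ((Xᵀ * X - 1) * (Xᵀ * X - 1)) (symPart (Xᵀ * Gf)) := by
      rw [minner, hsymTT]
    have h2 : minner ((Xᵀ * X - 1) * (Xᵀ * X - 1)) (symPart (Xᵀ * Gf))
        ≤ frob ((Xᵀ * X - 1) * (Xᵀ * X - 1)) * frob (symPart (Xᵀ * Gf)) := minner_le _ _
    have h3 : frob ((Xᵀ * X - 1) * (Xᵀ * X - 1)) ≤ frob (Xᵀ * X - 1) * frob (Xᵀ * X - 1) :=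
      frob_mul_le _ _
    have h4 : 0 ≤ frob (symPart (Xᵀ * Gf)) := frob_nonneg _
    nlinarith [mul_le_mul h3 hS h4 (mul_nonneg htn htn),
      mul_le_mul_of_nonneg_right (mul_le_mul hR hR htn (by norm_num : (0:ℝ) ≤ 1/6))
        (mul_nonneg hM.le (by norm_num : (0:ℝ) ≤ 7/6))]
  -- lower bound on frob (Edir X)^2
  have hE2 : 5/6 * frob (Xᵀ * X - 1) ^ 2 ≤ frob (Edir X) ^ 2 := by
    have e : minner (Edir X) (Edir X)
        = ((Xᵀ * X - 1) * ((Xᵀ * X - 1) * (Xᵀ * X - 1)ᵀ)).trace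
          + minner (Xᵀ * X - 1) (Xᵀ * X - 1) := by
      rw [Edir]; exact mul_inner_expand X (Xᵀ * X - 1)
    have h1 : ((Xᵀ * X - 1) * ((Xᵀ * X - 1) * (Xᵀ * X - 1)ᵀ)).trace
        = minner (Xᵀ * X - 1) ((Xᵀ * X - 1) * (Xᵀ * X - 1)ᵀ) := by rw [minner, hTT]
    have h2 : -(frob (Xᵀ * X - 1) * frob ((Xᵀ * X - 1) * (Xᵀ * X - 1)ᵀ))
        ≤ minner (Xᵀ * X - 1) ((Xᵀ * X - 1) * (Xᵀ * X - 1)ᵀ) := neg_minner_le _ _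
    have h3 : frob ((Xᵀ * X - 1) * (Xᵀ * X - 1)ᵀ)
        ≤ frob (Xᵀ * X - 1) * frob (Xᵀ * X - 1) := by
      calc frob ((Xᵀ * X - 1) * (Xᵀ * X - 1)ᵀ)
          ≤ frob (Xᵀ * X - 1) * frob (Xᵀ * X - 1)ᵀ := frob_mul_le _ _
        _ = frob (Xᵀ * X - 1) * frob (Xᵀ * X - 1) := by rw [frob_transpose]
    have h4 : minner (Edir X) (Edir X) = frob (Edir X) ^ 2 := minner_self _
    have h5 : minner (Xᵀ * X - 1) (Xᵀ * X - 1) = frob (Xᵀ * X - 1) ^ 2 := minner_self _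
    nlinarith [mul_le_mul_of_nonneg_left h3 htn,
      mul_le_mul_of_nonneg_right (mul_le_mul_of_nonneg_right hR htn) htn]
  -- expansion
  have hexp : frob (Gdir Gf X + β • Edir X) ^ 2
      = frob (Gdir Gf X) ^ 2 + 2 * (β * minner (Gdir Gf X) (Edir X))
        + β ^ 2 * frob (Edir X) ^ 2 := by
    rw [frob_expand_sq, minner_smul_right, frob_smul, mul_pow, sq_abs]
  rw [hexp]
  have k1 : β ^ 2 * (5/6 * frob (Xᵀ * X - 1) ^ 2) ≤ β ^ 2 * frob (Edir X) ^ 2 :=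
    mul_le_mul_of_nonneg_left hE2 (sq_nonneg β)
  have k2 : 2 * β * (-(7/4 * M * frob (Xᵀ * X - 1) ^ 2))
      ≤ 2 * β * minner (Gdir Gf X) (Edir X) :=
    mul_le_mul_of_nonneg_left hGE (by positivity)
  have key := scalar_key M β (frob (Xᵀ * X - 1)) hM hβ1 hβ2 htn
  linarith

set_option maxHeartbeats 2000000 in
/-- The deterministic aggregation step in the convergence proof of VRSGT:
the stationarity gap
`‖(1/d)Σᵢ Gᵢ(X̄)‖_F² + (1/d)Σᵢ ‖Xᵢ - X̄‖_F² + ‖X̄ᵀX̄ - I‖_F²` is bounded by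
`2(L̂² + 1)(‖(1/d)Σᵢ Hᵢ(Xᵢ)‖_F² + (1/d)Σᵢ ‖Xᵢ - X̄‖_F²)`, provided `f = (1/d)Σᵢ fᵢ` has
`‖∇f‖_F ≤ M` on `R = {X : ‖XᵀX - I‖_F ≤ 1/6}`, `β ≥ max{1, (6 + 21M)/5}`, `X̄ ∈ R`, and each
`Hᵢ = Gᵢ + βE` satisfies `‖Hᵢ(X̄) - Hᵢ(Xᵢ)‖_F ≤ L̂‖X̄ - Xᵢ‖_F`. -/
theorem stmt19 {n p d : ℕ} (hd : 0 < d)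
    (f : Fin d → Matrix (Fin n) (Fin p) ℝ → ℝ) (hf : ∀ i, Differentiable ℝ (f i))
    (gradf : Fin d → Matrix (Fin n) (Fin p) ℝ → Matrix (Fin n) (Fin p) ℝ)
    (hgrad : ∀ i X V, fderiv ℝ (f i) X V = minner (gradf i X) V)
    (F : Matrix (Fin n) (Fin p) ℝ → ℝ) (hF : F = fun X => (d : ℝ)⁻¹ * ∑ i, f i X)
    (gradF : Matrix (Fin n) (Fin p) ℝ → Matrix (Fin n) (Fin p) ℝ)
    (hgradF : ∀ X V, fderiv ℝ F X V = minner (gradF X) V)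
    (M : ℝ) (hM : 0 < M)
    (hbound : ∀ X : Matrix (Fin n) (Fin p) ℝ, frob (Xᵀ * X - 1) ≤ 1 / 6 → frob (gradF X) ≤ M)
    (β : ℝ) (hβ : max 1 ((6 + 21 * M) / 5) ≤ β)
    (H : Fin d → Matrix (Fin n) (Fin p) ℝ → Matrix (Fin n) (Fin p) ℝ)
    (hH : ∀ i X, H i X = Gdir (gradf i X) X + β • Edir X)
    (X : Fin d → Matrix (Fin n) (Fin p) ℝ)
    (Xbar : Matrix (Fin n) (Fin p) ℝ) (hXbar : Xbar = (d : ℝ)⁻¹ • ∑ i, X i)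
    (hXbarR : frob (Xbarᵀ * Xbar - 1) ≤ 1 / 6)
    (Lhat : ℝ) (hLhat : 0 < Lhat)
    (hLip : ∀ i, frob (H i Xbar - H i (X i)) ≤ Lhat * frob (Xbar - X i)) :
    frob ((d : ℝ)⁻¹ • ∑ i, Gdir (gradf i Xbar) Xbar) ^ 2
        + (d : ℝ)⁻¹ * ∑ i, frob (X i - Xbar) ^ 2
        + frob (Xbarᵀ * Xbar - 1) ^ 2
      ≤ 2 * (Lhat ^ 2 + 1)
          * (frob ((d : ℝ)⁻¹ • ∑ i, H i (X i)) ^ 2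
              + (d : ℝ)⁻¹ * ∑ i, frob (X i - Xbar) ^ 2) := by
  have hdpos : (0:ℝ) < (d:ℝ) := by exact_mod_cast hd
  have hdne : (d:ℝ) ≠ 0 := ne_of_gt hdpos
  have hdinv : (0:ℝ) ≤ (d:ℝ)⁻¹ := by positivity
  -- Step A : gradient of the average
  have hdiff : DifferentiableAt ℝ (fun Y => ∑ i, f i Y) Xbar :=
    DifferentiableAt.fun_sum (fun i _ => (hf i).differentiableAt)
  have hfd : fderiv ℝ F Xbar = (d:ℝ)⁻¹ • fderiv ℝ (fun Y => ∑ i, f i Y) Xbar := by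
    rw [hF]; exact fderiv_const_mul hdiff _
  have hfds : fderiv ℝ (fun Y => ∑ i, f i Y) Xbar = ∑ i, fderiv ℝ (f i) Xbar :=
    fderiv_fun_sum (fun i _ => (hf i).differentiableAt)
  have hgradFval : gradF Xbar = (d:ℝ)⁻¹ • ∑ i, gradf i Xbar := by
    have hv : ∀ V, minner (gradF Xbar - (d:ℝ)⁻¹ • ∑ i, gradf i Xbar) V = 0 := by
      intro V
      rw [minner_sub_left]
      have h1 : minner (gradF Xbar) V = (d:ℝ)⁻¹ * ∑ i, minner (gradf i Xbar) V := by
        rw [← hgradF Xbar V, hfd, hfds]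
        simp only [ContinuousLinearMap.smul_apply, ContinuousLinearMap.sum_apply,
          smul_eq_mul]
        congr 1
        exact Finset.sum_congr rfl fun i _ => hgrad i Xbar V
      have h2 : minner ((d:ℝ)⁻¹ • ∑ i, gradf i Xbar) V
          = (d:ℝ)⁻¹ * ∑ i, minner (gradf i Xbar) V := by
        rw [minner_smul_left, minner_sum_left]
      rw [h1, h2, sub_self]
    have hz := hv (gradF Xbar - (d:ℝ)⁻¹ • ∑ i, gradf i Xbar)
    exact sub_eq_zero.mp (eq_zero_of_minner_self _ hz)
  have hGavg : (d:ℝ)⁻¹ • ∑ i, Gdir (gradf i Xbar) Xbar = Gdir (gradF Xbar) Xbar := by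
    rw [hgradFval, Gdir_smul, Gdir_sum]
  -- average of H at Xbar
  have hHbar : (d:ℝ)⁻¹ • ∑ i, H i Xbar = Gdir (gradF Xbar) Xbar + β • Edir Xbar := by
    have h1 : ∑ i, H i Xbar
        = (∑ i, Gdir (gradf i Xbar) Xbar) + (d:ℕ) • (β • Edir Xbar) := by
      calc ∑ i, H i Xbar
          = ∑ i : Fin d, (Gdir (gradf i Xbar) Xbar + β • Edir Xbar) :=
            Finset.sum_congr rfl fun i _ => hH i Xbar
        _ = (∑ i, Gdir (gradf i Xbar) Xbar) + ∑ _i : Fin d, β • Edir Xbar :=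
            Finset.sum_add_distrib
        _ = _ := by rw [Finset.sum_const, Finset.card_univ, Fintype.card_fin]
    rw [h1, smul_add, hGavg]
    congr 1
    rw [← Nat.cast_smul_eq_nsmul ℝ, smul_smul, inv_mul_cancel₀ hdne, one_smul]
  -- Step B applied at Xbar
  have hGfM : frob (gradF Xbar) ≤ M := hbound Xbar hXbarR
  have hβ1 : (1:ℝ) ≤ β := le_trans (le_max_left _ _) hβ
  have hβ2 : (6 + 21 * M) / 5 ≤ β := le_trans (le_max_right _ _) hβ
  have hkey : frob (Gdir (gradF Xbar) Xbar) ^ 2 + frob (Xbarᵀ * Xbar - 1) ^ 2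
      ≤ frob ((d:ℝ)⁻¹ • ∑ i, H i Xbar) ^ 2 := by
    rw [hHbar]
    exact stepB (gradF Xbar) Xbar M β hM hGfM hXbarR hβ1 hβ2
  -- Step C : aggregation
  set a : ℝ := (d:ℝ)⁻¹ * ∑ i, frob (X i - Xbar) with ha
  have han : 0 ≤ a :=
    mul_nonneg hdinv (Finset.sum_nonneg fun i _ => frob_nonneg _)
  have hdiffH : frob (((d:ℝ)⁻¹ • ∑ i, H i Xbar) - ((d:ℝ)⁻¹ • ∑ i, H i (X i)))
      ≤ Lhat * a := by
    rw [← smul_sub, ← Finset.sum_sub_distrib, frob_smul, abs_of_nonneg hdinv]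
    have h1 : frob (∑ i, (H i Xbar - H i (X i))) ≤ ∑ i, Lhat * frob (X i - Xbar) := by
      refine le_trans (frob_sum_le _ _) (Finset.sum_le_sum fun i _ => ?_)
      calc frob (H i Xbar - H i (X i)) ≤ Lhat * frob (Xbar - X i) := hLip i
        _ = Lhat * frob (X i - Xbar) := by rw [frob_sub_comm]
    calc (d:ℝ)⁻¹ * frob (∑ i, (H i Xbar - H i (X i)))
        ≤ (d:ℝ)⁻¹ * ∑ i, Lhat * frob (X i - Xbar) :=
          mul_le_mul_of_nonneg_left h1 hdinv
      _ = Lhat * a := by rw [ha, ← Finset.mul_sum, Finset.mul_sum, ← Finset.mul_sum]; ring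
  have htri : frob ((d:ℝ)⁻¹ • ∑ i, H i Xbar)
      ≤ frob ((d:ℝ)⁻¹ • ∑ i, H i (X i)) + Lhat * a := by
    have hsplit : (d:ℝ)⁻¹ • ∑ i, H i Xbar
        = ((d:ℝ)⁻¹ • ∑ i, H i (X i))
          + (((d:ℝ)⁻¹ • ∑ i, H i Xbar) - ((d:ℝ)⁻¹ • ∑ i, H i (X i))) := by abel
    rw [hsplit]
    exact le_trans (frob_add_le _ _) (by linarith [hdiffH])
  have haQ : a ^ 2 ≤ (d:ℝ)⁻¹ * ∑ i, frob (X i - Xbar) ^ 2 := by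
    have hc := Finset.sum_mul_sq_le_sq_mul_sq Finset.univ
      (fun i => frob (X i - Xbar)) (fun _ => (1:ℝ))
    simp only [mul_one, one_pow, Finset.sum_const, Finset.card_univ, Fintype.card_fin,
      nsmul_eq_mul] at hc
    have h2 : ((d:ℝ)⁻¹) ^ 2 * (∑ i, frob (X i - Xbar)) ^ 2
        ≤ ((d:ℝ)⁻¹) ^ 2 * ((∑ i, frob (X i - Xbar) ^ 2) * d) :=
      mul_le_mul_of_nonneg_left hc (by positivity)
    have heq : ((d:ℝ)⁻¹) ^ 2 * ((∑ i, frob (X i - Xbar) ^ 2) * d)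
        = (d:ℝ)⁻¹ * ∑ i, frob (X i - Xbar) ^ 2 := by
      field_simp
    rw [ha, mul_pow]
    linarith
  have hQn : 0 ≤ (d:ℝ)⁻¹ * ∑ i, frob (X i - Xbar) ^ 2 :=
    mul_nonneg hdinv (Finset.sum_nonneg fun i _ => sq_nonneg _)
  have hHn : 0 ≤ frob ((d:ℝ)⁻¹ • ∑ i, H i (X i)) := frob_nonneg _
  have hHbn : 0 ≤ frob ((d:ℝ)⁻¹ • ∑ i, H i Xbar) := frob_nonneg _
  have hsq : frob ((d:ℝ)⁻¹ • ∑ i, H i Xbar) ^ 2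
      ≤ (frob ((d:ℝ)⁻¹ • ∑ i, H i (X i)) + Lhat * a) ^ 2 :=
    pow_le_pow_left₀ hHbn htri 2
  rw [hGavg]
  nlinarith [hkey, hsq, haQ, hQn, hHn, han, hLhat.le, sq_nonneg Lhat,
    sq_nonneg (frob ((d:ℝ)⁻¹ • ∑ i, H i (X i)) - Lhat * a),
    mul_le_mul_of_nonneg_left haQ (sq_nonneg Lhat),
    mul_nonneg (mul_nonneg (sq_nonneg Lhat) hHn) hHn]
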